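/- Quotient formula for generalized Schur complements: let M be a symmetric positive semidefinite 3×3 block matrix with blocks A, B, C in the first block row, Bᵀ, D, E in the second, and Cᵀ, Eᵀ, F in the third. Then (M /† F) /† (M̄ /† F) = A - B D† Bᵀ - (C - B D† E)(F - Eᵀ D† E)†(Cᵀ - Eᵀ D† Bᵀ), where M̄ = [[D, E], [Eᵀ, F]], and this matrix is positive semidefinite. -/

import Mathlib

open Matrix

/-- The four Moore–Penrose conditions: `Dp` is the Moore–Penrose pseudoinverse of `D`. -/
def IsMP {α : Type*} [Fintype α] [DecidableEq α] (D Dp : Matrix α α ℝ) : Prop :=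
  D * Dp * D = D ∧ Dp * D * Dp = Dp ∧ (D * Dp)ᵀ = D * Dp ∧ (Dp * D)ᵀ = Dp * D

section Aux

variable {α β : Type*} [Fintype α] [DecidableEq α] [Fintype β] [DecidableEq β]

lemma mp_unique {D X Y : Matrix α α ℝ} (hX : IsMP D X) (hY : IsMP D Y) : X = Y := by
  obtain ⟨hX1, hX2, hX3, hX4⟩ := hX
  obtain ⟨hY1, hY2, hY3, hY4⟩ := hY
  have hDX : D * X = D * Y := by
    have t1 : (D * Y) * (D * X) = D * X := by rw [← Matrix.mul_assoc, hY1]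
    have t2 : (D * Y) * (D * X) = D * Y := by
      calc (D * Y) * (D * X) = (D * Y)ᵀ * (D * X)ᵀ := by rw [hY3, hX3]
        _ = ((D * X) * (D * Y))ᵀ := by rw [← transpose_mul]
        _ = ((D * X * D) * Y)ᵀ := by rw [Matrix.mul_assoc (D * X) D Y]
        _ = (D * Y)ᵀ := by rw [hX1]
        _ = D * Y := hY3
    exact t1.symm.trans t2
  have hXD : X * D = Y * D := by
    have t1 : (X * D) * (Y * D) = X * D := by
      rw [Matrix.mul_assoc X D (Y * D), ← Matrix.mul_assoc D Y D, hY1]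
    have t2 : (X * D) * (Y * D) = Y * D := by
      calc (X * D) * (Y * D) = (X * D)ᵀ * (Y * D)ᵀ := by rw [hX4, hY4]
        _ = ((Y * D) * (X * D))ᵀ := by rw [← transpose_mul]
        _ = (Y * (D * X * D))ᵀ := by
              rw [Matrix.mul_assoc Y D (X * D), ← Matrix.mul_assoc D X D]
        _ = (Y * D)ᵀ := by rw [hX1]
        _ = Y * D := hY4
    exact t1.symm.trans t2
  calc X = X * D * X := hX2.symm
    _ = Y * D * X := by rw [hXD]
    _ = Y * (D * X) := Matrix.mul_assoc _ _ _
    _ = Y * (D * Y) := by rw [hDX]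
    _ = Y * D * Y := (Matrix.mul_assoc _ _ _).symm
    _ = Y := hY2

lemma IsMP.transpose' {D X : Matrix α α ℝ} (hD : Dᵀ = D) (h : IsMP D X) : IsMP D Xᵀ := by
  obtain ⟨h1, h2, h3, h4⟩ := h
  refine ⟨?_, ?_, ?_, ?_⟩
  · have := congrArg Matrix.transpose h1
    simp only [transpose_mul, hD] at this
    rw [← Matrix.mul_assoc] at this
    exact this
  · have := congrArg Matrix.transpose h2
    simp only [transpose_mul, hD] at this
    rw [← Matrix.mul_assoc] at this
    exact this
  · calc (D * Xᵀ)ᵀ = X * D := by rw [transpose_mul, transpose_transpose, hD]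
      _ = (X * D)ᵀ := h4.symm
      _ = D * Xᵀ := by rw [transpose_mul, hD]
  · calc (Xᵀ * D)ᵀ = D * X := by rw [transpose_mul, transpose_transpose, hD]
      _ = (D * X)ᵀ := h3.symm
      _ = Xᵀ * D := by rw [transpose_mul, hD]

lemma mp_symm {D X : Matrix α α ℝ} (hD : Dᵀ = D) (h : IsMP D X) : Xᵀ = X :=
  mp_unique (h.transpose' hD) h

lemma mul_mp_self {J : Matrix α β ℝ} {R Rp : Matrix β β ℝ}
    (hR : R = Jᵀ * J) (h : IsMP R Rp) : J * Rp * R = J := by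
  have hRs : Rᵀ = R := by rw [hR, transpose_mul, transpose_transpose]
  have hRps : Rpᵀ = Rp := mp_symm hRs h
  have hJR : (J * Rp * R)ᵀ = R * Rp * Jᵀ := by
    rw [transpose_mul, transpose_mul, hRs, hRps, ← Matrix.mul_assoc]
  have u : Jᵀ * (J * Rp * R) = R := by
    rw [← Matrix.mul_assoc, ← Matrix.mul_assoc, ← hR, h.1]
  have t1 : (R * Rp * Jᵀ) * (J * Rp * R) = R := by
    rw [Matrix.mul_assoc (R * Rp) Jᵀ, u, h.1]
  have t2 : (R * Rp * Jᵀ) * J = R := by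
    rw [Matrix.mul_assoc, ← hR, h.1]
  have key : (J * Rp * R - J)ᵀ * (J * Rp * R - J) = 0 := by
    rw [transpose_sub, hJR, Matrix.sub_mul, Matrix.mul_sub, Matrix.mul_sub,
      t1, t2, u, ← hR]
    simp
  have h0 : (J * Rp * R - J)ᴴ * (J * Rp * R - J) = 0 := by
    rw [conjTranspose_eq_transpose_of_trivial]; exact key
  have := Matrix.conjTranspose_mul_self_eq_zero.mp h0
  have := sub_eq_zero.mp this
  exact this

end Aux

theorem quotient_formula_gsc {n m p : ℕ}
    (A : Matrix (Fin n) (Fin n) ℝ) (B : Matrix (Fin n) (Fin m) ℝ)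
    (C : Matrix (Fin n) (Fin p) ℝ) (D : Matrix (Fin m) (Fin m) ℝ)
    (E : Matrix (Fin m) (Fin p) ℝ) (F : Matrix (Fin p) (Fin p) ℝ)
    (Dp : Matrix (Fin m) (Fin m) ℝ) (Fp : Matrix (Fin p) (Fin p) ℝ)
    (Sp : Matrix (Fin p) (Fin p) ℝ) (Tp : Matrix (Fin m) (Fin m) ℝ)
    (hM : (Matrix.fromBlocks A (Matrix.fromCols B C) (Matrix.fromRows Bᵀ Cᵀ)
            (Matrix.fromBlocks D E Eᵀ F)).PosSemidef)
    (hDp : IsMP D Dp) (hFp : IsMP F Fp)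
    (hSp : IsMP (F - Eᵀ * Dp * E) Sp)
    (hTp : IsMP (D - E * Fp * Eᵀ) Tp) :
    (A - C * Fp * Cᵀ) - (B - C * Fp * Eᵀ) * Tp * (Bᵀ - E * Fp * Cᵀ) =
      A - B * Dp * Bᵀ - (C - B * Dp * E) * Sp * (Cᵀ - Eᵀ * Dp * Bᵀ) ∧
    (A - B * Dp * Bᵀ - (C - B * Dp * E) * Sp * (Cᵀ - Eᵀ * Dp * Bᵀ)).PosSemidef := by
  open scoped MatrixOrder in obtain ⟨H, hH⟩ := CStarAlgebra.nonneg_iff_eq_star_mul_self.mp hM.nonneg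
  rw [star_eq_conjTranspose, conjTranspose_eq_transpose_of_trivial] at hH
  set H1 : Matrix (Fin n ⊕ (Fin m ⊕ Fin p)) (Fin n) ℝ := H.submatrix id Sum.inl with hH1def
  set H2 : Matrix (Fin n ⊕ (Fin m ⊕ Fin p)) (Fin m) ℝ :=
    H.submatrix id (Sum.inr ∘ Sum.inl) with hH2def
  set H3 : Matrix (Fin n ⊕ (Fin m ⊕ Fin p)) (Fin p) ℝ :=
    H.submatrix id (Sum.inr ∘ Sum.inr) with hH3def
  have hA : A = H1ᵀ * H1 := by
    ext i j
    have := congrFun (congrFun hH (Sum.inl i)) (Sum.inl j)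
    simpa [Matrix.mul_apply, hH1def] using this
  have hB : B = H1ᵀ * H2 := by
    ext i j
    have := congrFun (congrFun hH (Sum.inl i)) (Sum.inr (Sum.inl j))
    simpa [Matrix.mul_apply, hH1def, hH2def] using this
  have hC : C = H1ᵀ * H3 := by
    ext i j
    have := congrFun (congrFun hH (Sum.inl i)) (Sum.inr (Sum.inr j))
    simpa [Matrix.mul_apply, hH1def, hH3def] using this
  have hD : D = H2ᵀ * H2 := by
    ext i j
    have := congrFun (congrFun hH (Sum.inr (Sum.inl i))) (Sum.inr (Sum.inl j))
    simpa [Matrix.mul_apply, hH2def] using this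
  have hE : E = H2ᵀ * H3 := by
    ext i j
    have := congrFun (congrFun hH (Sum.inr (Sum.inl i))) (Sum.inr (Sum.inr j))
    simpa [Matrix.mul_apply, hH2def, hH3def] using this
  have hF : F = H3ᵀ * H3 := by
    ext i j
    have := congrFun (congrFun hH (Sum.inr (Sum.inr i))) (Sum.inr (Sum.inr j))
    simpa [Matrix.mul_apply, hH3def] using this
  -- transposes of block identities
  have hBt : Bᵀ = H2ᵀ * H1 := by rw [hB, transpose_mul, transpose_transpose]
  have hCt : Cᵀ = H3ᵀ * H1 := by rw [hC, transpose_mul, transpose_transpose]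
  have hEt : Eᵀ = H3ᵀ * H2 := by rw [hE, transpose_mul, transpose_transpose]
  -- symmetry facts
  have hDs : Dᵀ = D := by rw [hD, transpose_mul, transpose_transpose]
  have hFs : Fᵀ = F := by rw [hF, transpose_mul, transpose_transpose]
  have hDps : Dpᵀ = Dp := mp_symm hDs hDp
  have hFps : Fpᵀ = Fp := mp_symm hFs hFp
  -- range facts
  have r2 : H2 * Dp * D = H2 := mul_mp_self hD hDp
  have r3 : H3 * Fp * F = H3 := mul_mp_self hF hFp
  have e2D : Eᵀ * Dp * D = Eᵀ := by
    rw [hEt, Matrix.mul_assoc H3ᵀ H2 Dp, Matrix.mul_assoc H3ᵀ (H2 * Dp) D,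
      r2]
  have eFpF : E * Fp * F = E := by
    rw [hE, Matrix.mul_assoc H2ᵀ H3 Fp, Matrix.mul_assoc H2ᵀ (H3 * Fp) F,
      r3]
  -- the matrices J and J'
  set J : Matrix (Fin n ⊕ (Fin m ⊕ Fin p)) (Fin p) ℝ := H3 - H2 * (Dp * E) with hJdef
  set J' : Matrix (Fin n ⊕ (Fin m ⊕ Fin p)) (Fin m) ℝ := H2 - H3 * (Fp * Eᵀ) with hJ'def
  have hJt : Jᵀ = H3ᵀ - Eᵀ * Dp * H2ᵀ := by
    rw [hJdef, transpose_sub, transpose_mul, transpose_mul, hDps]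
  have hJ't : J'ᵀ = H2ᵀ - E * Fp * H3ᵀ := by
    rw [hJ'def, transpose_sub, transpose_mul, transpose_mul, transpose_transpose, hFps]
  have JtH1 : Jᵀ * H1 = Cᵀ - Eᵀ * Dp * Bᵀ := by
    rw [hJt, Matrix.sub_mul, ← hCt, Matrix.mul_assoc (Eᵀ * Dp) H2ᵀ H1, ← hBt]
  have JtH2 : Jᵀ * H2 = 0 := by
    rw [hJt, Matrix.sub_mul, ← hEt, Matrix.mul_assoc (Eᵀ * Dp) H2ᵀ H2, ← hD,
      e2D, sub_self]
  have JtH3 : Jᵀ * H3 = F - Eᵀ * Dp * E := by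
    rw [hJt, Matrix.sub_mul, ← hF, Matrix.mul_assoc (Eᵀ * Dp) H2ᵀ H3, ← hE]
  have J'tH1 : J'ᵀ * H1 = Bᵀ - E * Fp * Cᵀ := by
    rw [hJ't, Matrix.sub_mul, ← hBt, Matrix.mul_assoc (E * Fp) H3ᵀ H1, ← hCt]
  have J'tH3 : J'ᵀ * H3 = 0 := by
    rw [hJ't, Matrix.sub_mul, ← hE, Matrix.mul_assoc (E * Fp) H3ᵀ H3, ← hF,
      eFpF, sub_self]
  have J'tH2 : J'ᵀ * H2 = D - E * Fp * Eᵀ := by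
    rw [hJ't, Matrix.sub_mul, ← hD, Matrix.mul_assoc (E * Fp) H3ᵀ H2, ← hEt]
  -- the Schur complements as Gram matrices
  have hSeq : F - Eᵀ * Dp * E = Jᵀ * J := by
    have step : Jᵀ * J = Jᵀ * H3 - Jᵀ * (H2 * (Dp * E)) := by
      nth_rewrite 2 [hJdef]
      rw [Matrix.mul_sub]
    rw [step, JtH3, ← Matrix.mul_assoc Jᵀ H2 (Dp * E), JtH2, Matrix.zero_mul, sub_zero]
  have hTeq : D - E * Fp * Eᵀ = J'ᵀ * J' := by
    have step : J'ᵀ * J' = J'ᵀ * H2 - J'ᵀ * (H3 * (Fp * Eᵀ)) := by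
      nth_rewrite 2 [hJ'def]
      rw [Matrix.mul_sub]
    rw [step, J'tH2, ← Matrix.mul_assoc J'ᵀ H3 (Fp * Eᵀ), J'tH3, Matrix.zero_mul, sub_zero]
  have hSps : Spᵀ = Sp := mp_symm (by rw [hSeq, transpose_mul, transpose_transpose]) hSp
  have hTps : Tpᵀ = Tp := mp_symm (by rw [hTeq, transpose_mul, transpose_transpose]) hTp
  have rS : J * Sp * (F - Eᵀ * Dp * E) = J := mul_mp_self hSeq hSp
  have rT : J' * Tp * (D - E * Fp * Eᵀ) = J' := mul_mp_self hTeq hTp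
  -- the projections P and P'
  set P : Matrix (Fin n ⊕ (Fin m ⊕ Fin p)) (Fin n ⊕ (Fin m ⊕ Fin p)) ℝ :=
    H2 * (Dp * H2ᵀ) + J * (Sp * Jᵀ) with hPdef
  set P' : Matrix (Fin n ⊕ (Fin m ⊕ Fin p)) (Fin n ⊕ (Fin m ⊕ Fin p)) ℝ :=
    H3 * (Fp * H3ᵀ) + J' * (Tp * J'ᵀ) with hP'def
  have PH2 : P * H2 = H2 := by
    rw [hPdef, Matrix.add_mul, Matrix.mul_assoc H2 (Dp * H2ᵀ) H2, Matrix.mul_assoc Dp H2ᵀ H2,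
      ← hD, ← Matrix.mul_assoc H2 Dp D, r2, Matrix.mul_assoc J (Sp * Jᵀ) H2,
      Matrix.mul_assoc Sp Jᵀ H2, JtH2, Matrix.mul_zero, Matrix.mul_zero, add_zero]
  have PH3 : P * H3 = H3 := by
    rw [hPdef, Matrix.add_mul, Matrix.mul_assoc H2 (Dp * H2ᵀ) H3, Matrix.mul_assoc Dp H2ᵀ H3,
      ← hE, Matrix.mul_assoc J (Sp * Jᵀ) H3, Matrix.mul_assoc Sp Jᵀ H3, JtH3,
      ← Matrix.mul_assoc J Sp (F - Eᵀ * Dp * E), rS, hJdef]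
    abel
  have P'H3 : P' * H3 = H3 := by
    rw [hP'def, Matrix.add_mul, Matrix.mul_assoc H3 (Fp * H3ᵀ) H3, Matrix.mul_assoc Fp H3ᵀ H3,
      ← hF, ← Matrix.mul_assoc H3 Fp F, r3, Matrix.mul_assoc J' (Tp * J'ᵀ) H3,
      Matrix.mul_assoc Tp J'ᵀ H3, J'tH3, Matrix.mul_zero, Matrix.mul_zero, add_zero]
  have P'H2 : P' * H2 = H2 := by
    rw [hP'def, Matrix.add_mul, Matrix.mul_assoc H3 (Fp * H3ᵀ) H2, Matrix.mul_assoc Fp H3ᵀ H2,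
      ← hEt, Matrix.mul_assoc J' (Tp * J'ᵀ) H2, Matrix.mul_assoc Tp J'ᵀ H2, J'tH2,
      ← Matrix.mul_assoc J' Tp (D - E * Fp * Eᵀ), rT, hJ'def]
    abel
  have Psym : Pᵀ = P := by
    rw [hPdef]
    simp [transpose_add, transpose_mul, hDps, hSps, Matrix.mul_assoc]
  have P'sym : P'ᵀ = P' := by
    rw [hP'def]
    simp [transpose_add, transpose_mul, hFps, hTps, Matrix.mul_assoc]
  have PJ : P * J = J := by
    rw [hJdef, Matrix.mul_sub, PH3, ← Matrix.mul_assoc P H2 (Dp * E), PH2]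
  have P'J : P' * J = J := by
    rw [hJdef, Matrix.mul_sub, P'H3, ← Matrix.mul_assoc P' H2 (Dp * E), P'H2]
  have PJ' : P * J' = J' := by
    rw [hJ'def, Matrix.mul_sub, PH2, ← Matrix.mul_assoc P H3 (Fp * Eᵀ), PH3]
  have hP'P : P' * P = P := by
    rw [hPdef, Matrix.mul_add, ← Matrix.mul_assoc P' H2 (Dp * H2ᵀ), P'H2,
      ← Matrix.mul_assoc P' J (Sp * Jᵀ), P'J]
  have hPP' : P * P' = P' := by
    rw [hP'def, Matrix.mul_add, ← Matrix.mul_assoc P H3 (Fp * H3ᵀ), PH3,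
      ← Matrix.mul_assoc P J' (Tp * J'ᵀ), PJ']
  have PP : P * P = P := by
    nth_rewrite 2 [hPdef]
    rw [Matrix.mul_add, ← Matrix.mul_assoc P H2 (Dp * H2ᵀ), PH2,
      ← Matrix.mul_assoc P J (Sp * Jᵀ), PJ, hPdef]
  have P'J' : P' * J' = J' := by
    rw [hJ'def, Matrix.mul_sub, P'H2, ← Matrix.mul_assoc P' H3 (Fp * Eᵀ), P'H3]
  have P'P' : P' * P' = P' := by
    nth_rewrite 2 [hP'def]
    rw [Matrix.mul_add, ← Matrix.mul_assoc P' H3 (Fp * H3ᵀ), P'H3,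
      ← Matrix.mul_assoc P' J' (Tp * J'ᵀ), P'J', hP'def]
  have hPeqP' : P = P' := by
    calc P = P' * P := hP'P.symm
      _ = (Pᵀ * P'ᵀ)ᵀ := by rw [← transpose_mul, transpose_transpose]
      _ = (P * P')ᵀ := by rw [Psym, P'sym]
      _ = P'ᵀ := by rw [hPP']
      _ = P' := P'sym
  -- assembling the two expressions
  have H1tJ : H1ᵀ * J = C - B * (Dp * E) := by
    rw [hJdef, Matrix.mul_sub, ← hC, ← Matrix.mul_assoc H1ᵀ H2 (Dp * E), ← hB]
  have H1tJ' : H1ᵀ * J' = B - C * (Fp * Eᵀ) := by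
    rw [hJ'def, Matrix.mul_sub, ← hB, ← Matrix.mul_assoc H1ᵀ H3 (Fp * Eᵀ), ← hC]
  have PH1 : P * H1 = H2 * (Dp * Bᵀ) + J * (Sp * (Cᵀ - Eᵀ * Dp * Bᵀ)) := by
    rw [hPdef, Matrix.add_mul, Matrix.mul_assoc H2 (Dp * H2ᵀ) H1, Matrix.mul_assoc Dp H2ᵀ H1,
      ← hBt, Matrix.mul_assoc J (Sp * Jᵀ) H1, Matrix.mul_assoc Sp Jᵀ H1, JtH1]
  have P'H1 : P' * H1 = H3 * (Fp * Cᵀ) + J' * (Tp * (Bᵀ - E * Fp * Cᵀ)) := by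
    rw [hP'def, Matrix.add_mul, Matrix.mul_assoc H3 (Fp * H3ᵀ) H1, Matrix.mul_assoc Fp H3ᵀ H1,
      ← hCt, Matrix.mul_assoc J' (Tp * J'ᵀ) H1, Matrix.mul_assoc Tp J'ᵀ H1, J'tH1]
  have H1tPH1 : H1ᵀ * (P * H1) =
      B * (Dp * Bᵀ) + (C - B * (Dp * E)) * (Sp * (Cᵀ - Eᵀ * Dp * Bᵀ)) := by
    rw [PH1, Matrix.mul_add, ← Matrix.mul_assoc H1ᵀ H2 (Dp * Bᵀ), ← hB,
      ← Matrix.mul_assoc H1ᵀ J (Sp * (Cᵀ - Eᵀ * Dp * Bᵀ)), H1tJ]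
  have H1tP'H1 : H1ᵀ * (P' * H1) =
      C * (Fp * Cᵀ) + (B - C * (Fp * Eᵀ)) * (Tp * (Bᵀ - E * Fp * Cᵀ)) := by
    rw [P'H1, Matrix.mul_add, ← Matrix.mul_assoc H1ᵀ H3 (Fp * Cᵀ), ← hC,
      ← Matrix.mul_assoc H1ᵀ J' (Tp * (Bᵀ - E * Fp * Cᵀ)), H1tJ']
  set Q : Matrix (Fin n ⊕ (Fin m ⊕ Fin p)) (Fin n) ℝ := H1 - P * H1 with hQdef
  have QtQ : Qᵀ * Q = A - H1ᵀ * (P * H1) := by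
    rw [hQdef, transpose_sub, transpose_mul, Psym, Matrix.sub_mul, Matrix.mul_sub,
      Matrix.mul_sub, ← hA, Matrix.mul_assoc H1ᵀ P H1,
      Matrix.mul_assoc H1ᵀ P (P * H1), ← Matrix.mul_assoc P P H1, PP, sub_self, sub_zero]
  have Q'eq : H1 - P' * H1 = Q := by rw [hQdef, hPeqP']
  have Q'tQ' : Qᵀ * Q = A - H1ᵀ * (P' * H1) := by
    rw [← Q'eq, transpose_sub, transpose_mul, P'sym, Matrix.sub_mul, Matrix.mul_sub,
      Matrix.mul_sub, ← hA, Matrix.mul_assoc H1ᵀ P' H1,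
      Matrix.mul_assoc H1ᵀ P' (P' * H1), ← Matrix.mul_assoc P' P' H1, P'P', sub_self, sub_zero]
  have eqR : A - B * Dp * Bᵀ - (C - B * Dp * E) * Sp * (Cᵀ - Eᵀ * Dp * Bᵀ) = Qᵀ * Q := by
    rw [Matrix.mul_assoc B Dp Bᵀ, Matrix.mul_assoc B Dp E,
      Matrix.mul_assoc (C - B * (Dp * E)) Sp (Cᵀ - Eᵀ * Dp * Bᵀ), sub_sub, QtQ, H1tPH1]
  have eqL : (A - C * Fp * Cᵀ) - (B - C * Fp * Eᵀ) * Tp * (Bᵀ - E * Fp * Cᵀ) = Qᵀ * Q := by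
    rw [Matrix.mul_assoc C Fp Cᵀ, Matrix.mul_assoc C Fp Eᵀ,
      Matrix.mul_assoc (B - C * (Fp * Eᵀ)) Tp (Bᵀ - E * Fp * Cᵀ), sub_sub, Q'tQ', H1tP'H1]
  refine ⟨eqL.trans eqR.symm, ?_⟩
  rw [eqR]
  have := Matrix.posSemidef_conjTranspose_mul_self Q
  rwa [conjTranspose_eq_transpose_of_trivial] at this
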